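/- For every n ≥ 2, the Černý automaton C_n (with states Z_n, letter a mapping i ↦ i+1 mod n, and letter b mapping 0 ↦ 1 and fixing all other states) is synchronizing and its shortest reset word has length exactly (n-1)². -/
import Mathlib

/-- Action of a word on a state. -/
def actW {Q A : Type*} (δ : Q → A → Q) (q : Q) (w : List A) : Q := w.foldl δ q

/-- Image of the full state set under a word. -/
def img {Q A : Type*} [Fintype Q] [DecidableEq Q] (δ : Q → A → Q) (w : List A) : Finset Q :=
  Finset.univ.image (fun q => actW δ q w)

/-- The Černý automaton on ZMod n: letter `false` = a (cyclic shift),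
letter `true` = b (maps 0 to 1, fixes the rest). -/
def cerny (n : ℕ) [NeZero n] : ZMod n → Bool → ZMod n := fun i x =>
  if x then (if i = 0 then 1 else i) else i + 1

section CernyAux

variable (n : ℕ) [NeZero n]

lemma nron : (Finset.range n).Nonempty :=
  Finset.nonempty_range_iff.mpr (NeZero.ne n)

/-- max over S of val of (x + r) -/
def supv (S : Finset (ZMod n)) (r : ℕ) : ℕ := S.sup (fun x => (x + (r : ZMod n)).val)

def potval (S : Finset (ZMod n)) (r : ℕ) : ℕ := r + 1 + n * (supv n S r - 1)

/-- the potential: lower bound for the cost of synchronizing S -/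
def pot (S : Finset (ZMod n)) : ℕ := (Finset.range n).inf' (nron n) (potval n S)

lemma pot_le (S : Finset (ZMod n)) {r : ℕ} (hr : r < n) : pot n S ≤ potval n S r :=
  Finset.inf'_le _ (Finset.mem_range.mpr hr)

lemma valInj : Function.Injective (ZMod.val (n := n)) := by
  intro a b h
  have ha : ((a.val : ℕ) : ZMod n) = a := by
    rw [ZMod.natCast_val, ZMod.cast_id]
  have hb : ((b.val : ℕ) : ZMod n) = b := by
    rw [ZMod.natCast_val, ZMod.cast_id]
  rw [← ha, ← hb, h]

lemma val_pos_of_ne_zero {x : ZMod n} (hx : x ≠ 0) : 1 ≤ x.val := by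
  rcases Nat.eq_zero_or_pos x.val with h | h
  · exact absurd ((ZMod.val_eq_zero x).mp h) hx
  · exact h

lemma val_pred (x : ZMod n) (hx : x ≠ 0) : (x - 1).val = x.val - 1 := by
  have h1 : 1 ≤ x.val := val_pos_of_ne_zero n hx
  have hlt : x.val < n := ZMod.val_lt x
  have hcast : ((x.val - 1 : ℕ) : ZMod n) = x - 1 := by
    rw [Nat.cast_sub h1]
    rw [ZMod.natCast_val, ZMod.cast_id, Nat.cast_one]
  rw [← hcast, ZMod.val_cast_of_lt (by omega)]

lemma cast_nsub1 : ((n - 1 : ℕ) : ZMod n) = -1 := by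
  have h1 : 1 ≤ n := Nat.one_le_iff_ne_zero.mpr (NeZero.ne n)
  rw [Nat.cast_sub h1, ZMod.natCast_self, Nat.cast_one, zero_sub]

end CernyAux

section CernyLower

variable (n : ℕ) [NeZero n]

lemma pot_a (S : Finset (ZMod n)) :
    pot n S ≤ 1 + pot n (S.image (fun q => cerny n q false)) := by
  set T := S.image (fun q => cerny n q false) with hT
  obtain ⟨r₀, hmem, hval0⟩ := Finset.exists_mem_eq_inf' (nron n) (potval n T)
  have hval : pot n T = potval n T r₀ := hval0
  have hr₀ : r₀ < n := Finset.mem_range.mp hmem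
  have hsupT : ∀ r : ℕ, supv n T r = S.sup (fun x => (x + 1 + (r : ZMod n)).val) := by
    intro r
    rw [hT]
    unfold supv
    rw [Finset.sup_image]
    exact Finset.sup_congr rfl (fun x _ => rfl)
  by_cases hc : r₀ + 1 < n
  · have hsup : supv n S (r₀ + 1) = supv n T r₀ := by
      rw [hsupT]
      unfold supv
      congr 1
      funext x
      congr 1
      push_cast
      try ring
    have h2 : potval n S (r₀ + 1) = 1 + potval n T r₀ := by
      unfold potval
      rw [hsup]
      omega
    calc pot n S ≤ potval n S (r₀ + 1) := pot_le n S hc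
      _ = 1 + potval n T r₀ := h2
      _ = 1 + pot n T := by rw [hval]
  · have hr' : r₀ + 1 = n := by omega
    have hcast : ((r₀ : ℕ) : ZMod n) = -1 := by
      have h0 : ((r₀ + 1 : ℕ) : ZMod n) = 0 := by rw [hr']; exact ZMod.natCast_self n
      push_cast at h0
      linear_combination h0
    have hsup : supv n S 0 = supv n T r₀ := by
      rw [hsupT]
      unfold supv
      congr 1
      funext x
      congr 1
      rw [hcast]
      push_cast
      try ring
    have h2 : potval n S 0 ≤ 1 + potval n T r₀ := by
      unfold potval
      rw [hsup]
      omega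
    calc pot n S ≤ potval n S 0 := pot_le n S (by omega)
      _ ≤ 1 + potval n T r₀ := h2
      _ = 1 + pot n T := by rw [hval]

lemma pot_b (hn : 2 ≤ n) (S : Finset (ZMod n)) (hScard : 2 ≤ S.card)
    (hTcard : 2 ≤ (S.image (fun q => cerny n q true)).card) :
    pot n S ≤ 1 + pot n (S.image (fun q => cerny n q true)) := by
  haveI : Fact (1 < n) := ⟨by omega⟩
  set T := S.image (fun q => cerny n q true) with hT
  by_cases h0 : (0 : ZMod n) ∈ S
  · have hone : (1 : ZMod n) ≠ 0 := one_ne_zero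
    have hTne0 : ∀ y ∈ T, y ≠ 0 := by
      intro y hy
      rw [hT] at hy
      obtain ⟨x, hx, rfl⟩ := Finset.mem_image.mp hy
      by_cases hx0 : x = 0
      · simp [cerny, hx0]
      · simp [cerny, hx0]
    have hmemT : ∀ x ∈ S, x ≠ 0 → x ∈ T := by
      intro x hx hx0
      rw [hT]
      exact Finset.mem_image.mpr ⟨x, hx, by simp [cerny, hx0]⟩
    have h1T : (1 : ZMod n) ∈ T := by
      rw [hT]
      exact Finset.mem_image.mpr ⟨0, h0, by simp [cerny]⟩
    have hTnon : T.Nonempty := ⟨1, h1T⟩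
    obtain ⟨r₀, hmem, hval0⟩ := Finset.exists_mem_eq_inf' (nron n) (potval n T)
    have hval : pot n T = potval n T r₀ := hval0
    have hr₀ : r₀ < n := Finset.mem_range.mp hmem
    by_cases hc : r₀ + 1 < n
    · have hsup : supv n S r₀ ≤ supv n T r₀ := by
        apply Finset.sup_le
        intro x hx
        by_cases hx0 : x = 0
        · subst hx0
          have e1 : ((0 : ZMod n) + (r₀ : ZMod n)).val = r₀ := by
            rw [zero_add, ZMod.val_cast_of_lt hr₀]
          have e2 : ((1 : ZMod n) + (r₀ : ZMod n)).val = r₀ + 1 := by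
            rw [show (1 : ZMod n) + (r₀ : ZMod n) = ((r₀ + 1 : ℕ) : ZMod n) by push_cast; try ring,
              ZMod.val_cast_of_lt hc]
          rw [e1]
          calc r₀ ≤ r₀ + 1 := Nat.le_succ r₀
            _ = ((1 : ZMod n) + (r₀ : ZMod n)).val := e2.symm
            _ ≤ supv n T r₀ := Finset.le_sup (f := fun y : ZMod n => (y + (r₀ : ZMod n)).val) h1T
        · exact Finset.le_sup (f := fun y : ZMod n => (y + (r₀ : ZMod n)).val) (hmemT x hx hx0)
      have h2 : potval n S r₀ ≤ potval n T r₀ := by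
        unfold potval
        have := Nat.mul_le_mul_left n (Nat.sub_le_sub_right hsup 1)
        omega
      calc pot n S ≤ potval n S r₀ := pot_le n S hr₀
        _ ≤ potval n T r₀ := h2
        _ ≤ 1 + pot n T := by rw [hval]; omega
    · have hr' : r₀ + 1 = n := by omega
      have hcast : ((r₀ : ℕ) : ZMod n) = -1 := by
        have h0' : ((r₀ + 1 : ℕ) : ZMod n) = 0 := by rw [hr']; exact ZMod.natCast_self n
        push_cast at h0'
        linear_combination h0'
      set Y := T.sup (fun y : ZMod n => y.val) with hY
      have hY2 : 2 ≤ Y := by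
        obtain ⟨y₁, hy₁, y₂, hy₂, hne⟩ := Finset.one_lt_card.mp hTcard
        have v1 : y₁.val ≤ Y := Finset.le_sup (f := fun y : ZMod n => y.val) hy₁
        have v2 : y₂.val ≤ Y := Finset.le_sup (f := fun y : ZMod n => y.val) hy₂
        have hv : y₁.val ≠ y₂.val := fun h => hne (valInj n h)
        have h1 : 1 ≤ y₁.val := val_pos_of_ne_zero n (hTne0 y₁ hy₁)
        have h2 : 1 ≤ y₂.val := val_pos_of_ne_zero n (hTne0 y₂ hy₂)
        omega
      have hsupT : supv n T r₀ = Y - 1 := by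
        unfold supv
        apply le_antisymm
        · apply Finset.sup_le
          intro y hy
          have e : y + (r₀ : ZMod n) = y - 1 := by rw [hcast]; ring
          rw [e, val_pred n y (hTne0 y hy)]
          have hyY : y.val ≤ Y := Finset.le_sup (f := fun y : ZMod n => y.val) hy
          omega
        · obtain ⟨y₀, hy₀, hy₀v⟩ := Finset.exists_mem_eq_sup T hTnon (fun y : ZMod n => y.val)
          have e : y₀ + (r₀ : ZMod n) = y₀ - 1 := by rw [hcast]; ring
          have : Y - 1 = (y₀ + (r₀ : ZMod n)).val := by
            rw [e, val_pred n y₀ (hTne0 y₀ hy₀), hY, hy₀v]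
          rw [this]
          exact Finset.le_sup (f := fun y : ZMod n => (y + (r₀ : ZMod n)).val) hy₀
      have hsupS : supv n S 0 ≤ Y := by
        apply Finset.sup_le
        intro x hx
        have e : x + ((0 : ℕ) : ZMod n) = x := by push_cast; ring
        rw [e]
        by_cases hx0 : x = 0
        · subst hx0; simp
        · exact Finset.le_sup (f := fun y : ZMod n => y.val) (hmemT x hx hx0)
      have h2 : potval n S 0 ≤ 1 + potval n T r₀ := by
        unfold potval
        rw [hsupT, show Y - 1 - 1 = Y - 2 from by omega]
        have ha : n * (supv n S 0 - 1) ≤ n * (Y - 1) :=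
          Nat.mul_le_mul_left n (Nat.sub_le_sub_right hsupS 1)
        have hb : n * (Y - 1) = n + n * (Y - 2) := by
          have e : Y - 1 = (Y - 2) + 1 := by omega
          rw [e, Nat.mul_add, Nat.mul_one]
          omega
        omega
      calc pot n S ≤ potval n S 0 := pot_le n S (by omega)
        _ ≤ 1 + potval n T r₀ := h2
        _ = 1 + pot n T := by rw [hval]
  · have hTS : T = S := by
      rw [hT]
      have : ∀ x ∈ S, cerny n x true = x := by
        intro x hx
        have hx0 : x ≠ 0 := fun h => h0 (h ▸ hx)
        simp [cerny, hx0]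
      calc S.image (fun q => cerny n q true) = S.image id := Finset.image_congr this
        _ = S := Finset.image_id
    rw [hTS]
    omega

lemma pot_base (hn : 2 ≤ n) (S : Finset (ZMod n)) (hScard : 2 ≤ S.card)
    (h1 : (S.image (fun q => cerny n q true)).card ≤ 1) : pot n S ≤ 1 := by
  haveI : Fact (1 < n) := ⟨by omega⟩
  have hsub : S ⊆ {0, 1} := by
    intro z hz
    by_contra hzc
    simp only [Finset.mem_insert, Finset.mem_singleton] at hzc
    push_neg at hzc
    obtain ⟨hz0, hz1⟩ := hzc
    obtain ⟨x, hx, hxz⟩ := Finset.exists_mem_ne (show 1 < S.card by omega) z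
    have heq : cerny n z true = cerny n x true := by
      have hcle := Finset.card_le_one.mp h1
      exact hcle _ (Finset.mem_image_of_mem _ hz) _ (Finset.mem_image_of_mem _ hx)
    by_cases hx0 : x = 0
    · rw [show cerny n z true = z from by simp [cerny, hz0],
        show cerny n x true = 1 from by simp [cerny, hx0]] at heq
      exact hz1 heq
    · rw [show cerny n z true = z from by simp [cerny, hz0],
        show cerny n x true = x from by simp [cerny, hx0]] at heq
      exact hxz heq.symm
  have h01 : S = {0, 1} := by
    apply Finset.eq_of_subset_of_card_le hsub
    have : ({0, 1} : Finset (ZMod n)).card ≤ 2 := le_trans (Finset.card_insert_le _ _) (by simp)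
    omega
  have hsup : supv n S 0 = 1 := by
    rw [h01]
    unfold supv
    rw [Finset.sup_insert, Finset.sup_singleton]
    have e0 : ((0 : ZMod n) + ((0:ℕ) : ZMod n)).val = 0 := by push_cast; simp
    have e1 : ((1 : ZMod n) + ((0:ℕ) : ZMod n)).val = 1 := by
      push_cast
      rw [add_zero]
      rw [(Nat.cast_one (R := ZMod n)).symm, ZMod.val_cast_of_lt (by omega)]
    rw [e0, e1]
    exact max_eq_right (Nat.zero_le 1)
  calc pot n S ≤ potval n S 0 := pot_le n S (by omega)
    _ = 1 := by unfold potval; rw [hsup]; simp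

lemma pot_univ (hn : 2 ≤ n) : (n - 1) ^ 2 ≤ pot n (Finset.univ : Finset (ZMod n)) := by
  unfold pot
  rw [Finset.le_inf'_iff]
  intro r hr
  have hr' : r < n := Finset.mem_range.mp hr
  have hsup : supv n (Finset.univ : Finset (ZMod n)) r = n - 1 := by
    apply le_antisymm
    · apply Finset.sup_le
      intro x _
      have := ZMod.val_lt (x + (r : ZMod n))
      omega
    · set x : ZMod n := ((n - 1 : ℕ) : ZMod n) - (r : ZMod n) with hx
      have e : x + (r : ZMod n) = ((n - 1 : ℕ) : ZMod n) := by rw [hx]; ring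
      have : (x + (r : ZMod n)).val = n - 1 := by
        rw [e, ZMod.val_cast_of_lt (by omega)]
      calc n - 1 = (x + (r : ZMod n)).val := this.symm
        _ ≤ supv n Finset.univ r :=
          Finset.le_sup (f := fun y : ZMod n => (y + (r : ZMod n)).val) (Finset.mem_univ x)
  unfold potval
  rw [hsup]
  obtain ⟨k, rfl⟩ : ∃ k, n = k + 2 := ⟨n - 2, by omega⟩
  have e1 : (k + 2 - 1) ^ 2 = k * k + 2 * k + 1 := by
    have : k + 2 - 1 = k + 1 := by omega
    rw [this]; ring
  have e2 : (k + 2) * (k + 2 - 1 - 1) = k * k + 2 * k := by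
    have : k + 2 - 1 - 1 = k := by omega
    rw [this]; ring
  omega

lemma key (hn : 2 ≤ n) : ∀ (w : List Bool) (S : Finset (ZMod n)),
    (S.image (fun q => actW (cerny n) q w)).card = 1 →
    (if S.card ≤ 1 then 0 else pot n S) ≤ w.length := by
  intro w
  induction w with
  | nil =>
    intro S h
    have : S.card = 1 := by
      have e : S.image (fun q => actW (cerny n) q []) = S := by
        have : (fun q : ZMod n => actW (cerny n) q []) = id := by funext q; rfl
        rw [this, Finset.image_id]
      rw [e] at h
      exact h
    simp [this]
  | cons c w ih =>
    intro S h
    set T := S.image (fun q => cerny n q c) with hTdef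
    have himg : S.image (fun q => actW (cerny n) q (c :: w))
        = T.image (fun q => actW (cerny n) q w) := by
      rw [hTdef, Finset.image_image]
      rfl
    rw [himg] at h
    have ihT := ih T h
    by_cases hS1 : S.card ≤ 1
    · simp [hS1]
    · rw [if_neg hS1]
      have hS2 : 2 ≤ S.card := by omega
      by_cases hT1 : T.card ≤ 1
      · have hpot : pot n S ≤ 1 := by
          cases c with
          | false =>
            exfalso
            have hinj : Function.Injective (fun q : ZMod n => cerny n q false) := by
              intro u v huv
              simp only [cerny, if_neg Bool.false_ne_true] at huv
              simpa using huv
            have : T.card = S.card := by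
              rw [hTdef]; exact Finset.card_image_of_injective S hinj
            omega
          | true =>
            apply pot_base n hn S hS2
            rw [← hTdef]
            exact hT1
        simp only [List.length_cons]
        omega
      · have hT2 : 2 ≤ T.card := by omega
        have hstep : pot n S ≤ 1 + pot n T := by
          cases c with
          | false => exact pot_a n S
          | true =>
            have h' : 2 ≤ (S.image (fun q => cerny n q true)).card := by rw [← hTdef]; exact hT2
            exact pot_b n hn S hS2 h'
        have hTw : pot n T ≤ w.length := by
          rw [if_neg (by omega : ¬ T.card ≤ 1)] at ihT
          exact ihT
        simp only [List.length_cons]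
        omega

end CernyLower

section CernyUpper

variable (n : ℕ) [NeZero n]

def wblock : List Bool := List.replicate (n - 1) false ++ [true]

def wstar : List Bool := true :: (List.replicate (n - 2) (wblock n)).flatten

lemma actW_append {Q A : Type*} (δ : Q → A → Q) (q : Q) (u v : List A) :
    actW δ q (u ++ v) = actW δ (actW δ q u) v := by
  simp [actW]

lemma actW_replicate_false (k : ℕ) (q : ZMod n) :
    actW (cerny n) q (List.replicate k false) = q + (k : ZMod n) := by
  induction k generalizing q with
  | zero => simp [actW]
  | succ k ih =>
    rw [List.replicate_succ]
    have : actW (cerny n) q (false :: List.replicate k false)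
        = actW (cerny n) (q + 1) (List.replicate k false) := by
      simp [actW, cerny]
    rw [this, ih]
    push_cast
    ring

lemma act_block (q : ZMod n) : actW (cerny n) q (wblock n) = cerny n (q - 1) true := by
  unfold wblock
  rw [actW_append, actW_replicate_false]
  have e : q + ((n - 1 : ℕ) : ZMod n) = q - 1 := by rw [cast_nsub1]; ring
  rw [e]
  simp [actW]

lemma blocks (hn : 2 ≤ n) : ∀ (k : ℕ) (x : ZMod n), x ≠ 0 → x.val ≤ k + 1 →
    actW (cerny n) x ((List.replicate k (wblock n)).flatten) = 1 := by
  haveI : Fact (1 < n) := ⟨by omega⟩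
  intro k
  induction k with
  | zero =>
    intro x hx0 hxv
    have h1 : x.val = 1 := by
      have := val_pos_of_ne_zero n hx0
      omega
    have hx1 : x = 1 := by
      apply valInj n
      rw [h1, (Nat.cast_one (R := ZMod n)).symm,
        ZMod.val_cast_of_lt (by omega)]
    simp [actW, hx1]
  | succ k ih =>
    intro x hx0 hxv
    rw [List.replicate_succ, List.flatten_cons, actW_append, act_block]
    by_cases hx1 : x = 1
    · subst hx1
      have e : (1 : ZMod n) - 1 = 0 := by ring
      rw [e]
      have e2 : cerny n 0 true = 1 := by simp [cerny]
      rw [e2]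
      apply ih 1 one_ne_zero
      rw [(Nat.cast_one (R := ZMod n)).symm,
        ZMod.val_cast_of_lt (by omega)]
      omega
    · have hx0' : x - 1 ≠ 0 := sub_ne_zero.mpr hx1
      have e : cerny n (x - 1) true = x - 1 := by simp [cerny, hx0']
      rw [e]
      apply ih _ hx0'
      rw [val_pred n x hx0]
      omega

lemma wstar_resets (hn : 2 ≤ n) (q : ZMod n) : actW (cerny n) q (wstar n) = 1 := by
  haveI : Fact (1 < n) := ⟨by omega⟩
  have hstep : actW (cerny n) q (wstar n)
      = actW (cerny n) (cerny n q true) ((List.replicate (n - 2) (wblock n)).flatten) := rfl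
  rw [hstep]
  have hy : cerny n q true ≠ 0 := by
    by_cases hq : q = 0
    · simp [cerny, hq]
    · simp [cerny, hq]
  apply blocks n hn (n - 2) _ hy
  have := ZMod.val_lt (cerny n q true)
  omega

lemma wstar_length (hn : 2 ≤ n) : (wstar n).length = (n - 1) ^ 2 := by
  unfold wstar wblock
  rw [List.length_cons, List.length_flatten]
  rw [List.map_replicate, List.sum_replicate]
  simp only [List.length_append, List.length_replicate, List.length_singleton, smul_eq_mul]
  obtain ⟨k, rfl⟩ : ∃ k, n = k + 2 := ⟨n - 2, by omega⟩
  have e1 : (k + 2 - 1) ^ 2 = k * k + 2 * k + 1 := by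
    have : k + 2 - 1 = k + 1 := by omega
    rw [this]; ring
  have e2 : (k + 2 - 2) * (k + 2 - 1 + 1) = k * k + 2 * k := by
    have h1 : k + 2 - 2 = k := by omega
    have h2 : k + 2 - 1 + 1 = k + 2 := by omega
    rw [h1, h2]; ring
  omega

end CernyUpper

/-- The Černý automaton is synchronizing and its shortest reset word has
length exactly (n-1)^2. -/
theorem cerny_reset_length (n : ℕ) [NeZero n] (hn : 2 ≤ n) :
    (∃ w : List Bool, (img (cerny n) w).card = 1 ∧ w.length = (n - 1) ^ 2) ∧
    (∀ w : List Bool, (img (cerny n) w).card = 1 → (n - 1) ^ 2 ≤ w.length) := by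
  constructor
  · refine ⟨wstar n, ?_, wstar_length n hn⟩
    have hfun : (fun q : ZMod n => actW (cerny n) q (wstar n)) = fun _ => (1 : ZMod n) :=
      funext (wstar_resets n hn)
    have himg : img (cerny n) (wstar n) = {1} := by
      unfold img
      rw [hfun]
      exact Finset.image_const Finset.univ_nonempty _
    rw [himg]
    exact Finset.card_singleton _
  · intro w hw
    have hkey := key n hn w Finset.univ hw
    have hcard : (Finset.univ : Finset (ZMod n)).card = n := by
      rw [Finset.card_univ, ZMod.card]
    rw [if_neg (by omega)] at hkey
    exact le_trans (pot_univ n hn) hkey
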